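/- In the block model graph, any vector of temperatures that is constant on free nodes of each block and satisfies the per-block balance equations is a solution of the full n-node Dirichlet problem; by uniqueness, the equilibrium solution is constant on the free nodes of each block. -/

import Mathlib

/-- Block model graph: a vector constant on the free nodes of each block whose
block values satisfy the per-block balance equations solves the full Dirichlet
problem; by uniqueness, the equilibrium solution is constant on the free nodes
of each block. -/
theorem block_model_solution_constant_on_blocks (n K : ℕ) [NeZero K]
    (blk : Fin n → Fin K)
    (p q : ℝ) (hp : 0 < p) (hq : 0 < q)
    (A : Matrix (Fin n) (Fin n) ℝ)
    (hA : ∀ i j, A i j = if blk i = blk j then p else q)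
    (P : Matrix (Fin n) (Fin n) ℝ) (hP : P = Matrix.of fun i j => A i j / ∑ l, A i l)
    (S : Finset (Fin n)) (hS : S.Nonempty) (hS' : S ≠ Finset.univ)
    (nv sv : Fin K → ℕ)
    (hnv : ∀ k, nv k = (Finset.univ.filter (fun i => blk i = k)).card)
    (hsv : ∀ k, sv k = (S.filter (fun i => blk i = k)).card)
    (hs : ∀ k, 0 < sv k ∧ sv k < nv k)
    (t : Fin K → ℝ)
    (hbal : ∀ k, ((nv k : ℝ) * (p - q) + (n : ℝ) * q) * t k =
      (sv 0 : ℝ) * (if k = 0 then p else q) + ((nv k : ℝ) - (sv k : ℝ)) * p * t k +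
        ∑ j ∈ Finset.univ.erase k, ((nv j : ℝ) - (sv j : ℝ)) * q * t j)
    (T : Fin n → ℝ)
    (hT : ∀ i, T i = if i ∈ S then (if blk i = 0 then (1 : ℝ) else 0) else t (blk i)) :
    (∀ i ∉ S, T i = (P.mulVec T) i) ∧
    (∀ T' : Fin n → ℝ, (∀ i ∈ S, T' i = T i) → (∀ i ∉ S, T' i = (P.mulVec T') i) →
      ∀ i ∉ S, ∀ j ∉ S, blk i = blk j → T' i = T' j) := by
  classical
  have hnvle : ∀ k, nv k ≤ n := by
    intro k
    rw [hnv]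
    simpa using Finset.card_filter_le Finset.univ (fun i => blk i = k)
  -- row sums depend only on the block
  have hrow : ∀ i : Fin n, ∑ l, A i l = (nv (blk i) : ℝ) * (p - q) + (n : ℝ) * q := by
    intro i
    have h1 : ∀ l, A i l = if blk l = blk i then p else q := by
      intro l
      rw [hA]
      by_cases h : blk i = blk l <;> simp [h, eq_comm]
    rw [Finset.sum_congr rfl (fun l _ => h1 l), Finset.sum_ite, Finset.sum_const,
      Finset.sum_const]
    have hc1 : (Finset.univ.filter fun l => blk l = blk i).card = nv (blk i) := (hnv _).symm
    have hc2 : (Finset.univ.filter fun l => ¬ blk l = blk i).card = n - nv (blk i) := by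
      have h := Finset.card_filter_add_card_filter_not
        (s := (Finset.univ : Finset (Fin n))) (p := fun l => blk l = blk i)
      simp only [Finset.card_univ, Fintype.card_fin] at h
      omega
    rw [hc1, hc2, nsmul_eq_mul, nsmul_eq_mul, Nat.cast_sub (hnvle _)]
    ring
  have hdpos : ∀ i : Fin n, 0 < ∑ l, A i l := by
    intro i
    rw [hrow]
    have h1 : 1 ≤ nv (blk i) := (hs (blk i)).1.trans (hs (blk i)).2
    have h1' : (1 : ℝ) ≤ (nv (blk i) : ℝ) := by exact_mod_cast h1
    have h2 : (nv (blk i) : ℝ) ≤ (n : ℝ) := by exact_mod_cast hnvle (blk i)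
    nlinarith [mul_nonneg (sub_nonneg.2 h2) hq.le]
  -- cardinality of free nodes in each block
  have hcard : ∀ j : Fin K, ((Sᶜ.filter fun l => blk l = j).card : ℝ) = (nv j : ℝ) - sv j := by
    intro j
    have hsplit : (Finset.univ.filter fun l => blk l = j)
        = (S.filter fun l => blk l = j) ∪ (Sᶜ.filter fun l => blk l = j) := by
      rw [← Finset.filter_union, Finset.union_compl]
    have hdisj : Disjoint (S.filter fun l => blk l = j) (Sᶜ.filter fun l => blk l = j) :=
      Finset.disjoint_filter_filter disjoint_compl_right
    have : nv j = sv j + (Sᶜ.filter fun l => blk l = j).card := by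
      rw [hnv, hsv, hsplit, Finset.card_union_of_disjoint hdisj]
    rw [this]
    push_cast
    ring
  -- the numerator: weighted sum against T
  have hnum : ∀ i : Fin n, ∑ l, A i l * T l =
      (sv 0 : ℝ) * (if blk i = 0 then p else q)
        + ((nv (blk i) : ℝ) - (sv (blk i) : ℝ)) * p * t (blk i)
        + ∑ j ∈ Finset.univ.erase (blk i), ((nv j : ℝ) - (sv j : ℝ)) * q * t j := by
    intro i
    have hsplit := Finset.sum_add_sum_compl S (fun l => A i l * T l)
    rw [← hsplit]
    have hseed : ∑ l ∈ S, A i l * T l = (sv 0 : ℝ) * (if blk i = 0 then p else q) := by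
      have : ∀ l ∈ S, A i l * T l
          = if blk l = 0 then (if blk i = 0 then p else q) else 0 := by
        intro l hl
        rw [hA, hT, if_pos hl]
        by_cases h0 : blk l = 0
        · by_cases hik : blk i = 0 <;> simp [h0, hik]
        · simp [h0]
      rw [Finset.sum_congr rfl this, ← Finset.sum_filter, Finset.sum_const, hsv,
        nsmul_eq_mul]
    have hfree : ∑ l ∈ Sᶜ, A i l * T l
        = ∑ j : Fin K, ((nv j : ℝ) - (sv j : ℝ)) * (if j = blk i then p else q) * t j := by
      rw [← Finset.sum_fiberwise Sᶜ blk (fun l => A i l * T l)]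
      refine Finset.sum_congr rfl fun j _ => ?_
      have : ∀ l ∈ Sᶜ.filter (fun l => blk l = j), A i l * T l
          = (if j = blk i then p else q) * t j := by
        intro l hl
        obtain ⟨hl1, hl2⟩ := Finset.mem_filter.1 hl
        rw [Finset.mem_compl] at hl1
        rw [hA, hT, if_neg hl1, hl2]
        by_cases h : blk i = j
        · rw [if_pos h, if_pos h.symm]
        · rw [if_neg h, if_neg (Ne.symm h)]
      rw [Finset.sum_congr rfl this, Finset.sum_const, nsmul_eq_mul, hcard]
      ring
    rw [hseed, hfree, ← Finset.add_sum_erase _ _ (Finset.mem_univ (blk i)),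
      if_pos rfl]
    have : ∑ j ∈ Finset.univ.erase (blk i),
        ((nv j : ℝ) - (sv j : ℝ)) * (if j = blk i then p else q) * t j
        = ∑ j ∈ Finset.univ.erase (blk i), ((nv j : ℝ) - (sv j : ℝ)) * q * t j := by
      refine Finset.sum_congr rfl fun j hj => ?_
      rw [if_neg (Finset.ne_of_mem_erase hj)]
    rw [this]
    ring
  have hmulVec : ∀ (v : Fin n → ℝ) (i : Fin n),
      (P.mulVec v) i = (∑ l, A i l * v l) / (∑ l, A i l) := by
    intro v i
    rw [hP]
    simp only [Matrix.mulVec, dotProduct, Matrix.of_apply]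
    rw [Finset.sum_div]
    exact Finset.sum_congr rfl fun l _ => by ring
  constructor
  · intro i hi
    rw [hmulVec, hnum, hrow, hT, if_neg hi]
    rw [eq_div_iff (by rw [← hrow i]; exact (hdpos i).ne')]
    rw [mul_comm, ← hbal (blk i)]
  · intro T' hTs hTh i hi j hj hb
    rw [hTh i hi, hTh j hj, hmulVec, hmulVec]
    have hAij : ∀ l, A i l = A j l := by
      intro l
      rw [hA, hA, hb]
    have h1 : ∑ l, A i l * T' l = ∑ l, A j l * T' l :=
      Finset.sum_congr rfl fun l _ => by rw [hAij]
    have h2 : ∑ l, A i l = ∑ l, A j l := Finset.sum_congr rfl fun l _ => hAij l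
    rw [h1, h2]
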